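/- Let S ∈ ℝ^{p×p}, A ∈ ℝ^{ℓ×ℓ}, B ∈ ℝ^{ℓ×m}, D ∈ ℝ^{m×p}, and Σ ∈ ℝ^{ℓ×p} satisfy ΣS = AΣ and BᵀΣ + D = 0. Let w solve ẇ = Sw and η solve η̇ = Aη − Bu for some input u. Then the error η̃ = η − Σw satisfies η̃̇ = Aη̃ − Bu, and the mismatch signal d̃ := Dw + Bᵀη equals Bᵀη̃. -/

import Mathlib

open Matrix

theorem internal_model_error_dynamics
    {p ℓ m : ℕ}
    (S : Matrix (Fin p) (Fin p) ℝ) (A : Matrix (Fin ℓ) (Fin ℓ) ℝ)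
    (B : Matrix (Fin ℓ) (Fin m) ℝ) (D : Matrix (Fin m) (Fin p) ℝ)
    (Sig : Matrix (Fin ℓ) (Fin p) ℝ)
    (hreg1 : Sig * S = A * Sig) (hreg2 : Bᵀ * Sig + D = 0)
    (w : ℝ → Fin p → ℝ) (η : ℝ → Fin ℓ → ℝ) (u : ℝ → Fin m → ℝ)
    (hw : ∀ t, HasDerivAt w (S.mulVec (w t)) t)
    (hη : ∀ t, HasDerivAt η (A.mulVec (η t) - B.mulVec (u t)) t) :
    (∀ t, HasDerivAt (fun t => η t - Sig.mulVec (w t))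
        (A.mulVec (η t - Sig.mulVec (w t)) - B.mulVec (u t)) t) ∧
    (∀ t, D.mulVec (w t) + Bᵀ.mulVec (η t) = Bᵀ.mulVec (η t - Sig.mulVec (w t))) := by
  have hD : D = -(Bᵀ * Sig) := by
    have := hreg2
    rw [add_comm] at this
    exact eq_neg_of_add_eq_zero_left this
  constructor
  · intro t
    have h1 : HasDerivAt (fun t => Sig.mulVec (w t)) (Sig.mulVec (S.mulVec (w t))) t :=
      (Matrix.mulVecLin Sig).toContinuousLinearMap.hasFDerivAt.comp_hasDerivAt t (hw t)
    have h := (hη t).sub h1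
    refine h.congr_deriv ?_
    symm
    rw [mulVec_sub, mulVec_mulVec, ← hreg1, ← mulVec_mulVec]
    abel
  · intro t
    rw [hD, mulVec_sub, neg_mulVec, ← mulVec_mulVec]
    abel
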